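/- The function f(m) := (2E(m) + (m−2)K(m))·√(4−2m)/m is strictly decreasing on (0,1) and maps (0,1) bijectively onto (−∞, 0). -/

import Mathlib

open Real

noncomputable def ellK (m : ℝ) : ℝ :=
  ∫ θ in (0:ℝ)..(π / 2), 1 / Real.sqrt (1 - m * Real.sin θ ^ 2)

noncomputable def ellE (m : ℝ) : ℝ :=
  ∫ θ in (0:ℝ)..(π / 2), Real.sqrt (1 - m * Real.sin θ ^ 2)

section OrbitAuxSection
open Set intervalIntegral

namespace OrbitAux

noncomputable def H (m θ : ℝ) : ℝ :=
  Real.cos (2*θ) * (Real.sqrt (4 - 2*m) *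
    ((Real.sqrt (1 - m * Real.sin θ ^ 2))⁻¹ - (Real.sqrt (1 - m * Real.cos θ ^ 2))⁻¹))

noncomputable def f (m : ℝ) : ℝ :=
  (2 * ellE m + (m - 2) * ellK m) * Real.sqrt (4 - 2 * m) / m

lemma aux_pos {m p : ℝ} (hm1 : m < 1) (hm0 : 0 ≤ m) (hp0 : 0 ≤ p) (hp1 : p ≤ 1) :
    0 < 1 - m * p := by nlinarith

lemma sin_pos_aux {m θ : ℝ} (hm1 : m < 1) (hm0 : 0 ≤ m) : 0 < 1 - m * Real.sin θ ^ 2 :=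
  aux_pos hm1 hm0 (sq_nonneg _) (Real.sin_sq_le_one θ)

lemma cos_pos_aux {m θ : ℝ} (hm1 : m < 1) (hm0 : 0 ≤ m) : 0 < 1 - m * Real.cos θ ^ 2 :=
  aux_pos hm1 hm0 (sq_nonneg _) (Real.cos_sq_le_one θ)

lemma cont_sqrt_sin {m : ℝ} : Continuous fun θ : ℝ => Real.sqrt (1 - m * Real.sin θ ^ 2) :=
  (continuous_const.sub (continuous_const.mul (Real.continuous_sin.pow 2))).sqrt

lemma cont_sqrt_cos {m : ℝ} : Continuous fun θ : ℝ => Real.sqrt (1 - m * Real.cos θ ^ 2) :=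
  (continuous_const.sub (continuous_const.mul (Real.continuous_cos.pow 2))).sqrt

lemma cont_inv_sin {m : ℝ} (hm0 : 0 ≤ m) (hm1 : m < 1) :
    Continuous fun θ : ℝ => (Real.sqrt (1 - m * Real.sin θ ^ 2))⁻¹ :=
  cont_sqrt_sin.inv₀ fun θ => (Real.sqrt_pos.2 (sin_pos_aux hm1 hm0)).ne'

lemma cont_inv_cos {m : ℝ} (hm0 : 0 ≤ m) (hm1 : m < 1) :
    Continuous fun θ : ℝ => (Real.sqrt (1 - m * Real.cos θ ^ 2))⁻¹ :=
  cont_sqrt_cos.inv₀ fun θ => (Real.sqrt_pos.2 (cos_pos_aux hm1 hm0)).ne'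

lemma cont_H {m : ℝ} (hm0 : 0 ≤ m) (hm1 : m < 1) : Continuous (H m) := by
  unfold H
  exact (Real.continuous_cos.comp (continuous_const.mul continuous_id)).mul
    (continuous_const.mul ((cont_inv_sin hm0 hm1).sub (cont_inv_cos hm0 hm1)))

/-- Step 1 : `2 E + (m-2) K = m * ∫ cos 2θ / √(1 - m sin²θ)`. -/
lemma step1 {m : ℝ} (hm0 : 0 < m) (hm1 : m < 1) :
    2 * ellE m + (m - 2) * ellK m
      = m * ∫ θ in (0:ℝ)..(π/2), Real.cos (2*θ) * (Real.sqrt (1 - m * Real.sin θ ^ 2))⁻¹ := by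
  have hiE : IntervalIntegrable (fun θ => Real.sqrt (1 - m * Real.sin θ ^ 2)) MeasureTheory.volume 0 (π/2) :=
    cont_sqrt_sin.intervalIntegrable _ _
  have hiK : IntervalIntegrable (fun θ => 1 / Real.sqrt (1 - m * Real.sin θ ^ 2)) MeasureTheory.volume 0 (π/2) := by
    simpa [one_div] using (cont_inv_sin hm0.le hm1).intervalIntegrable (0:ℝ) (π/2)
  rw [ellE, ellK, ← intervalIntegral.integral_const_mul, ← intervalIntegral.integral_const_mul,
    ← intervalIntegral.integral_add (hiE.const_mul 2) (hiK.const_mul (m-2)),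
    ← intervalIntegral.integral_const_mul]
  apply intervalIntegral.integral_congr
  intro θ _
  have hu : 0 < 1 - m * Real.sin θ ^ 2 := sin_pos_aux hm1 hm0.le
  have hs : 0 < Real.sqrt (1 - m * Real.sin θ ^ 2) := Real.sqrt_pos.2 hu
  have hsq : Real.sqrt (1 - m * Real.sin θ ^ 2) * Real.sqrt (1 - m * Real.sin θ ^ 2)
      = 1 - m * Real.sin θ ^ 2 := Real.mul_self_sqrt hu.le
  have hc : Real.cos (2*θ) = 1 - 2 * Real.sin θ ^ 2 := by
    rw [Real.cos_two_mul, Real.cos_sq']; ring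
  field_simp
  nlinarith [hsq, hc]


lemma cont_F {m : ℝ} (hm0 : 0 ≤ m) (hm1 : m < 1) :
    Continuous fun θ : ℝ => Real.cos (2*θ) * (Real.sqrt (1 - m * Real.sin θ ^ 2))⁻¹ :=
  (Real.continuous_cos.comp (continuous_const.mul continuous_id)).mul (cont_inv_sin hm0 hm1)

lemma step2 {m : ℝ} (hm0 : 0 ≤ m) (hm1 : m < 1) :
    (∫ θ in (0:ℝ)..(π/2), Real.cos (2*θ) * (Real.sqrt (1 - m * Real.sin θ ^ 2))⁻¹)
      = ∫ θ in (0:ℝ)..(π/4), Real.cos (2*θ) *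
          ((Real.sqrt (1 - m * Real.sin θ ^ 2))⁻¹ - (Real.sqrt (1 - m * Real.cos θ ^ 2))⁻¹) := by
  have h1 : IntervalIntegrable
      (fun θ : ℝ => Real.cos (2*θ) * (Real.sqrt (1 - m * Real.sin θ ^ 2))⁻¹)
      MeasureTheory.volume 0 (π/4) := (cont_F hm0 hm1).intervalIntegrable _ _
  have h2 : IntervalIntegrable
      (fun θ : ℝ => Real.cos (2*θ) * (Real.sqrt (1 - m * Real.sin θ ^ 2))⁻¹)
      MeasureTheory.volume (π/4) (π/2) := (cont_F hm0 hm1).intervalIntegrable _ _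
  rw [← intervalIntegral.integral_add_adjacent_intervals h1 h2]
  have key : (∫ θ in (π/4:ℝ)..(π/2), Real.cos (2*θ) * (Real.sqrt (1 - m * Real.sin θ ^ 2))⁻¹)
      = ∫ θ in (0:ℝ)..(π/4), -(Real.cos (2*θ) * (Real.sqrt (1 - m * Real.cos θ ^ 2))⁻¹) := by
    have h := intervalIntegral.integral_comp_sub_left (a := (0:ℝ)) (b := π/4)
      (fun θ : ℝ => Real.cos (2*θ) * (Real.sqrt (1 - m * Real.sin θ ^ 2))⁻¹) (π/2)
    rw [show π/2 - π/4 = π/4 by ring, sub_zero] at h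
    rw [← h]
    apply intervalIntegral.integral_congr
    intro θ _
    simp only
    rw [show 2 * (π/2 - θ) = π - 2*θ by ring, Real.cos_pi_sub, Real.sin_pi_div_two_sub]
    ring
  rw [key, ← intervalIntegral.integral_add h1 (by
      apply IntervalIntegrable.neg
      exact ((Real.continuous_cos.comp (continuous_const.mul continuous_id)).mul
        (cont_inv_cos hm0 hm1)).intervalIntegrable _ _)]
  apply intervalIntegral.integral_congr
  intro θ _
  simp only
  ring

lemma fEq {m : ℝ} (hm0 : 0 < m) (hm1 : m < 1) : f m = ∫ θ in (0:ℝ)..(π/4), H m θ := by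
  unfold f
  rw [step1 hm0 hm1, step2 hm0.le hm1]
  rw [show ∀ x y : ℝ, m * x * y / m = y * x from fun x y => by field_simp]
  rw [← intervalIntegral.integral_const_mul]
  apply intervalIntegral.integral_congr
  intro θ _
  simp only [H]
  ring

lemma hasDerivAt_Hθ {p q x : ℝ} (hp : 0 < p) (hpq : p < q) (hsum : p + q = 1)
    (hx0 : 0 < x) (hx1 : x < 1) :
    HasDerivAt (fun y => Real.sqrt (4 - 2*y) * ((Real.sqrt (1 - y*p))⁻¹ - (Real.sqrt (1 - y*q))⁻¹))
      (-((q - p) * ((Real.sqrt (1-x*p))^3 + (Real.sqrt (1-x*q))^3)) /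
        (Real.sqrt (4-2*x) * ((Real.sqrt (1-x*p))^3 * (Real.sqrt (1-x*q))^3))) x := by
  have hq1 : q < 1 := by linarith
  have hp1 : p < 1 := by linarith
  have hA : 0 < 1 - x*p := by nlinarith
  have hB : 0 < 1 - x*q := by nlinarith
  have hS : 0 < 4 - 2*x := by nlinarith
  set a := Real.sqrt (1 - x*p) with ha_def
  set b := Real.sqrt (1 - x*q) with hb_def
  set s := Real.sqrt (4 - 2*x) with hs_def
  have ha : 0 < a := Real.sqrt_pos.2 hA
  have hb : 0 < b := Real.sqrt_pos.2 hB
  have hs : 0 < s := Real.sqrt_pos.2 hS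
  have ha2 : a^2 = 1 - x*p := Real.sq_sqrt hA.le
  have hb2 : b^2 = 1 - x*q := Real.sq_sqrt hB.le
  have hs2 : s^2 = 4 - 2*x := Real.sq_sqrt hS.le
  have d1 : HasDerivAt (fun y : ℝ => 1 - y*p) (-p) x := by
    simpa using ((hasDerivAt_id x).mul_const p).const_sub 1
  have d1' : HasDerivAt (fun y : ℝ => 1 - y*q) (-q) x := by
    simpa using ((hasDerivAt_id x).mul_const q).const_sub 1
  have d2 : HasDerivAt (fun y : ℝ => Real.sqrt (1 - y*p)) (1/(2*a) * (-p)) x :=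
    (Real.hasDerivAt_sqrt hA.ne').comp x d1
  have d2' : HasDerivAt (fun y : ℝ => Real.sqrt (1 - y*q)) (1/(2*b) * (-q)) x :=
    (Real.hasDerivAt_sqrt hB.ne').comp x d1'
  have d3 : HasDerivAt (fun y : ℝ => (Real.sqrt (1 - y*p))⁻¹) (-(1/(2*a) * (-p)) / a^2) x :=
    d2.inv ha.ne'
  have d3' : HasDerivAt (fun y : ℝ => (Real.sqrt (1 - y*q))⁻¹) (-(1/(2*b) * (-q)) / b^2) x :=
    d2'.inv hb.ne'
  have d4 : HasDerivAt (fun y : ℝ => 4 - 2*y) (-2) x := by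
    simpa using ((hasDerivAt_id x).const_mul 2).const_sub 4
  have d5 : HasDerivAt (fun y : ℝ => Real.sqrt (4 - 2*y)) (1/(2*s) * (-2)) x :=
    (Real.hasDerivAt_sqrt hS.ne').comp x d4
  have d6 := d5.mul (d3.sub d3')
  convert d6 using 1
  · rfl
  · rfl
  · rfl
  simp only [Pi.sub_apply]
  rw [← ha_def, ← hb_def, ← hs_def]
  have r1 : s^2 * p = 4*p - 2 + 2*a^2 := by linear_combination p * hs2 - 2 * ha2
  have r2 : s^2 * q = 4*q - 2 + 2*b^2 := by linear_combination q * hs2 - 2 * hb2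
  field_simp
  ring_nf
  linear_combination a^3 * r2 - b^3 * r1 + (2*a^3 - 2*b^3) * hsum

lemma Hθ_anti {p q m1 m2 : ℝ} (hp : 0 < p) (hpq : p < q) (hsum : p + q = 1)
    (h1 : 0 < m1) (h12 : m1 < m2) (h2 : m2 < 1) :
    Real.sqrt (4 - 2*m2) * ((Real.sqrt (1 - m2*p))⁻¹ - (Real.sqrt (1 - m2*q))⁻¹)
      < Real.sqrt (4 - 2*m1) * ((Real.sqrt (1 - m1*p))⁻¹ - (Real.sqrt (1 - m1*q))⁻¹) := by
  have anti : StrictAntiOn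
      (fun y => Real.sqrt (4 - 2*y) * ((Real.sqrt (1 - y*p))⁻¹ - (Real.sqrt (1 - y*q))⁻¹))
      (Icc m1 m2) := by
    apply strictAntiOn_of_deriv_neg (convex_Icc _ _)
    · intro y hy
      exact (hasDerivAt_Hθ hp hpq hsum (lt_of_lt_of_le h1 hy.1)
        (lt_of_le_of_lt hy.2 h2)).continuousAt.continuousWithinAt
    · intro y hy
      rw [interior_Icc] at hy
      have hy0 : 0 < y := lt_trans h1 hy.1
      have hy1 : y < 1 := lt_trans hy.2 h2
      have h := hasDerivAt_Hθ hp hpq hsum hy0 hy1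
      rw [h.deriv]
      have hq1 : q < 1 := by linarith
      have hp1 : p < 1 := by linarith
      have hA : 0 < Real.sqrt (1 - y*p) := Real.sqrt_pos.2 (by nlinarith)
      have hB : 0 < Real.sqrt (1 - y*q) := Real.sqrt_pos.2 (by nlinarith)
      have hS : 0 < Real.sqrt (4 - 2*y) := Real.sqrt_pos.2 (by nlinarith)
      apply div_neg_of_neg_of_pos
      · have : 0 < (q - p) * (Real.sqrt (1 - y*p) ^ 3 + Real.sqrt (1 - y*q) ^ 3) :=
          mul_pos (sub_pos.2 hpq) (by positivity)
        linarith
      · positivity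
  exact anti (Set.left_mem_Icc.2 h12.le) (Set.right_mem_Icc.2 h12.le) h12

lemma pq_facts {θ : ℝ} (h0 : 0 < θ) (h4 : θ < π/4) :
    0 < Real.sin θ ^ 2 ∧ Real.sin θ ^ 2 < Real.cos θ ^ 2
      ∧ Real.sin θ ^ 2 + Real.cos θ ^ 2 = 1 := by
  have hpi := Real.pi_pos
  have hπ : θ < π := by linarith
  have hs : 0 < Real.sin θ := Real.sin_pos_of_pos_of_lt_pi h0 hπ
  have h1 : Real.sin θ < Real.sin (π/4) :=
    Real.strictMonoOn_sin ⟨by linarith, by linarith⟩ ⟨by linarith, by linarith⟩ h4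
  have h2 : Real.cos (π/4) < Real.cos θ :=
    Real.strictAntiOn_cos ⟨by linarith, by linarith⟩ ⟨by linarith, by linarith⟩ h4
  rw [Real.sin_pi_div_four] at h1
  rw [Real.cos_pi_div_four] at h2
  have hsc : Real.sin θ < Real.cos θ := by linarith
  exact ⟨pow_pos hs 2, by nlinarith, Real.sin_sq_add_cos_sq θ⟩

lemma H_strict {m1 m2 θ : ℝ} (hm1 : m1 ∈ Ioo (0:ℝ) 1) (hm2 : m2 ∈ Ioo (0:ℝ) 1)
    (h12 : m1 < m2) (h0 : 0 < θ) (h4 : θ < π/4) : H m2 θ < H m1 θ := by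
  obtain ⟨hp, hpq, hsum⟩ := pq_facts h0 h4
  have hpi := Real.pi_pos
  have hcos : 0 < Real.cos (2*θ) :=
    Real.cos_pos_of_mem_Ioo ⟨by linarith, by linarith⟩
  exact mul_lt_mul_of_pos_left (Hθ_anti hp hpq hsum hm1.1 h12 hm2.2) hcos

lemma f_strictAnti : StrictAntiOn f (Ioo (0:ℝ) 1) := by
  intro m1 hm1 m2 hm2 h12
  have hpi := Real.pi_pos
  rw [fEq hm2.1 hm2.2, fEq hm1.1 hm1.2]
  apply intervalIntegral.integral_lt_integral_of_continuousOn_of_le_of_exists_lt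
    (by linarith : (0:ℝ) < π/4)
  · exact (cont_H hm2.1.le hm2.2).continuousOn
  · exact (cont_H hm1.1.le hm1.2).continuousOn
  · intro θ hθ
    rcases eq_or_lt_of_le hθ.2 with h|h
    · simp [H, h, Real.cos_pi_div_two, show 2 * (π/4) = π/2 by ring]
    · exact (H_strict hm1 hm2 h12 hθ.1 h).le
  · exact ⟨π/8, ⟨by linarith, by linarith⟩,
      H_strict hm1 hm2 h12 (by linarith) (by linarith)⟩

lemma sin_le_cos_of_le {θ : ℝ} (h0 : 0 ≤ θ) (h4 : θ ≤ π/4) : Real.sin θ ≤ Real.cos θ := by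
  have hpi := Real.pi_pos
  have h1 : Real.sin θ ≤ Real.sin (π/4) :=
    Real.strictMonoOn_sin.monotoneOn ⟨by linarith, by linarith⟩ ⟨by linarith, by linarith⟩ h4
  have h2 : Real.cos (π/4) ≤ Real.cos θ :=
    Real.strictAntiOn_cos.antitoneOn ⟨by linarith, by linarith⟩ ⟨by linarith, by linarith⟩ h4
  rw [Real.sin_pi_div_four] at h1
  rw [Real.cos_pi_div_four] at h2
  linarith

lemma H_nonpos {m θ : ℝ} (hm : m ∈ Ioo (0:ℝ) 1) (h0 : 0 ≤ θ) (h4 : θ ≤ π/4) :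
    H m θ ≤ 0 := by
  have hpi := Real.pi_pos
  have hA : 0 < 1 - m * Real.sin θ ^ 2 :=
    aux_pos hm.2 hm.1.le (sq_nonneg _) (Real.sin_sq_le_one θ)
  have hB : 0 < 1 - m * Real.cos θ ^ 2 :=
    aux_pos hm.2 hm.1.le (sq_nonneg _) (Real.cos_sq_le_one θ)
  have hBA : 1 - m * Real.cos θ ^ 2 ≤ 1 - m * Real.sin θ ^ 2 := by
    have hsc := sin_le_cos_of_le h0 h4
    have hs0 : 0 ≤ Real.sin θ := Real.sin_nonneg_of_nonneg_of_le_pi h0 (by linarith)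
    nlinarith [hm.1.le, mul_nonneg (mul_nonneg hm.1.le (sub_nonneg.2 hsc))
      (by linarith : (0:ℝ) ≤ Real.cos θ + Real.sin θ)]
  have hAB' : Real.sqrt (1 - m * Real.cos θ ^ 2) ≤ Real.sqrt (1 - m * Real.sin θ ^ 2) :=
    Real.sqrt_le_sqrt hBA
  have hinv : (Real.sqrt (1 - m * Real.sin θ ^ 2))⁻¹
      ≤ (Real.sqrt (1 - m * Real.cos θ ^ 2))⁻¹ := by
    gcongr
  have hcos : 0 ≤ Real.cos (2*θ) :=
    Real.cos_nonneg_of_mem_Icc ⟨by linarith, by linarith⟩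
  have hs : 0 ≤ Real.sqrt (4 - 2*m) := Real.sqrt_nonneg _
  unfold H
  have : (Real.sqrt (1 - m * Real.sin θ ^ 2))⁻¹
      - (Real.sqrt (1 - m * Real.cos θ ^ 2))⁻¹ ≤ 0 := by linarith
  exact mul_nonpos_of_nonneg_of_nonpos hcos (mul_nonpos_of_nonneg_of_nonpos hs this)

lemma H_neg {m θ : ℝ} (hm : m ∈ Ioo (0:ℝ) 1) (h0 : 0 < θ) (h4 : θ < π/4) :
    H m θ < 0 := by
  have hpi := Real.pi_pos
  obtain ⟨hp, hpq, hsum⟩ := pq_facts h0 h4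
  have hA : 0 < 1 - m * Real.sin θ ^ 2 :=
    aux_pos hm.2 hm.1.le (sq_nonneg _) (Real.sin_sq_le_one θ)
  have hB : 0 < 1 - m * Real.cos θ ^ 2 :=
    aux_pos hm.2 hm.1.le (sq_nonneg _) (Real.cos_sq_le_one θ)
  have hBA : 1 - m * Real.cos θ ^ 2 < 1 - m * Real.sin θ ^ 2 := by nlinarith [hm.1]
  have hsq : Real.sqrt (1 - m * Real.cos θ ^ 2) < Real.sqrt (1 - m * Real.sin θ ^ 2) :=
    Real.sqrt_lt_sqrt hB.le hBA
  have hinv : (Real.sqrt (1 - m * Real.sin θ ^ 2))⁻¹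
      < (Real.sqrt (1 - m * Real.cos θ ^ 2))⁻¹ := by
    gcongr
  have hcos : 0 < Real.cos (2*θ) :=
    Real.cos_pos_of_mem_Ioo ⟨by linarith, by linarith⟩
  have hs : 0 < Real.sqrt (4 - 2*m) := Real.sqrt_pos.2 (by linarith [hm.2])
  unfold H
  exact mul_neg_of_pos_of_neg hcos (mul_neg_of_pos_of_neg hs (by linarith))

lemma f_neg {m : ℝ} (hm : m ∈ Ioo (0:ℝ) 1) : f m < 0 := by
  have hpi := Real.pi_pos
  rw [fEq hm.1 hm.2]
  have hlt : (∫ θ in (0:ℝ)..(π/4), H m θ) < ∫ _θ in (0:ℝ)..(π/4), (0:ℝ) := by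
    apply intervalIntegral.integral_lt_integral_of_continuousOn_of_le_of_exists_lt
      (by linarith : (0:ℝ) < π/4)
    · exact (cont_H hm.1.le hm.2).continuousOn
    · exact continuousOn_const
    · exact fun θ hθ => H_nonpos hm hθ.1.le hθ.2
    · exact ⟨π/8, ⟨by linarith, by linarith⟩,
        H_neg hm (by linarith) (by linarith)⟩
  simpa using hlt

/-- purely algebraic form of the pointwise lower bound. -/
lemma alg_lb {m c s a b : ℝ} (hm0 : 0 < m) (ha0 : 0 < a) (hb0 : 0 < b)
    (hab : b ≤ a) (h7a : 7/10 ≤ a) (h7b : 7/10 ≤ b) (hsle : s ≤ 2) (hs0 : 0 ≤ s)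
    (hd : a^2 - b^2 ≤ m) (hc0 : 0 ≤ c) (hc1 : c ≤ 1) :
    -6*m ≤ c * (s * (a⁻¹ - b⁻¹)) := by
  have hamb : a - b ≤ m := by
    nlinarith [mul_nonneg (sub_nonneg.2 hab) (by linarith : (0:ℝ) ≤ a + b - 1)]
  have habm : (49:ℝ)/100 ≤ a*b :=
    le_trans (by norm_num) (mul_le_mul h7a h7b (by norm_num) (by linarith))
  have hinv : -3*m ≤ a⁻¹ - b⁻¹ := by
    rw [inv_sub_inv ha0.ne' hb0.ne', le_div_iff₀ (by positivity)]
    nlinarith [mul_nonneg hm0.le (by linarith : (0:ℝ) ≤ 3*(a*b) - 1)]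
  have hinv0 : a⁻¹ - b⁻¹ ≤ 0 := by
    have h1 : a⁻¹ ≤ b⁻¹ := by gcongr
    linarith
  have hst0 : s * (a⁻¹ - b⁻¹) ≤ 0 := mul_nonpos_of_nonneg_of_nonpos hs0 hinv0
  have hst : -6*m ≤ s * (a⁻¹ - b⁻¹) := by
    nlinarith [mul_nonneg (by linarith : (0:ℝ) ≤ 2 - s)
      (by linarith : (0:ℝ) ≤ -(a⁻¹ - b⁻¹))]
  nlinarith [mul_nonneg (by linarith : (0:ℝ) ≤ 1 - c)
    (by linarith : (0:ℝ) ≤ -(s * (a⁻¹ - b⁻¹)))]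

lemma H_lb {m θ : ℝ} (hm0 : 0 < m) (hm : m ≤ 1/2) (h0 : 0 ≤ θ) (h4 : θ ≤ π/4) :
    -6*m ≤ H m θ := by
  have hpi := Real.pi_pos
  have hm1 : m < 1 := by linarith
  have hA : 0 < 1 - m * Real.sin θ ^ 2 :=
    aux_pos hm1 hm0.le (sq_nonneg _) (Real.sin_sq_le_one θ)
  have hB : 0 < 1 - m * Real.cos θ ^ 2 :=
    aux_pos hm1 hm0.le (sq_nonneg _) (Real.cos_sq_le_one θ)
  have hBA : 1 - m * Real.cos θ ^ 2 ≤ 1 - m * Real.sin θ ^ 2 := by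
    have hsc := sin_le_cos_of_le h0 h4
    have hs0 : 0 ≤ Real.sin θ := Real.sin_nonneg_of_nonneg_of_le_pi h0 (by linarith)
    nlinarith [mul_nonneg (mul_nonneg hm0.le (sub_nonneg.2 hsc))
      (by linarith : (0:ℝ) ≤ Real.cos θ + Real.sin θ)]
  have h12A : 1/2 ≤ 1 - m * Real.sin θ ^ 2 := by
    nlinarith [mul_nonneg hm0.le (sub_nonneg.2 (Real.sin_sq_le_one θ))]
  have h12B : 1/2 ≤ 1 - m * Real.cos θ ^ 2 := by
    nlinarith [mul_nonneg hm0.le (sub_nonneg.2 (Real.cos_sq_le_one θ))]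
  apply alg_lb hm0 (Real.sqrt_pos.2 hA) (Real.sqrt_pos.2 hB) (Real.sqrt_le_sqrt hBA)
    ((Real.le_sqrt (by norm_num) hA.le).2 (by nlinarith))
    ((Real.le_sqrt (by norm_num) hB.le).2 (by nlinarith))
    ?_ (Real.sqrt_nonneg _) ?_
    (Real.cos_nonneg_of_mem_Icc ⟨by linarith, by linarith⟩) (Real.cos_le_one _)
  · exact Real.sqrt_le_iff.2 ⟨by norm_num, by nlinarith⟩
  · rw [Real.sq_sqrt hA.le, Real.sq_sqrt hB.le]
    nlinarith [mul_nonneg hm0.le (sub_nonneg.2 (Real.cos_sq_le_one θ)),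
      mul_nonneg hm0.le (sq_nonneg (Real.sin θ))]

lemma f_lb {m : ℝ} (hm0 : 0 < m) (hm : m ≤ 1/2) : -6*m ≤ f m := by
  have hpi := Real.pi_pos
  have hm1 : m < 1 := by linarith
  rw [fEq hm0 hm1]
  have hmono := intervalIntegral.integral_mono_on (by linarith : (0:ℝ) ≤ π/4)
    (_root_.intervalIntegrable_const (μ := MeasureTheory.volume) (c := -6*m)) ((cont_H hm0.le hm1).intervalIntegrable _ _)
    (fun θ hθ => H_lb hm0 hm hθ.1 hθ.2)
  rw [intervalIntegral.integral_const] at hmono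
  have : (π/4 - 0) • (-6*m) = (π/4) * (-6*m) := by norm_num
  rw [this] at hmono
  nlinarith [Real.pi_le_four, hmono, hm0.le]

/-- algebraic pointwise upper bound. -/
lemma alg_ub {c s a b u : ℝ} (ha0 : 0 < a) (hb0 : 0 < b) (hu0 : 0 < u)
    (hab : b ≤ a) (hbu : b ≤ u) (ha7 : 1/2 ≤ a^2)
    (hcr : Real.sqrt 2 / 2 ≤ c) (hsr : Real.sqrt 2 ≤ s) :
    c * (s * (a⁻¹ - b⁻¹)) ≤ Real.sqrt 2 - u⁻¹ := by
  have hr : Real.sqrt 2 * Real.sqrt 2 = 2 := Real.mul_self_sqrt (by norm_num)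
  have hr0 : (0:ℝ) ≤ Real.sqrt 2 := Real.sqrt_nonneg 2
  have hainv : a⁻¹ ≤ Real.sqrt 2 := by
    rw [inv_le_iff_one_le_mul₀ ha0]
    nlinarith [mul_nonneg ha0.le hr0]
  have hbinv : u⁻¹ ≤ b⁻¹ := by
    have := one_div_le_one_div_of_le hb0 hbu
    simpa [one_div] using this
  have ht0 : a⁻¹ - b⁻¹ ≤ 0 := by
    have h1 : a⁻¹ ≤ b⁻¹ := by gcongr
    linarith
  have hcs : 1 ≤ c * s := by
    nlinarith [mul_le_mul hcr hsr hr0 (by nlinarith : (0:ℝ) ≤ c)]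
  have hchain : c * (s * (a⁻¹ - b⁻¹)) ≤ a⁻¹ - b⁻¹ := by
    nlinarith [mul_nonneg (by linarith : (0:ℝ) ≤ c * s - 1)
      (by linarith : (0:ℝ) ≤ -(a⁻¹ - b⁻¹))]
  calc c * (s * (a⁻¹ - b⁻¹)) ≤ a⁻¹ - b⁻¹ := hchain
    _ ≤ Real.sqrt 2 - u⁻¹ := by linarith

lemma H_ub {m θ : ℝ} (hm : m ∈ Ioo (0:ℝ) 1) (h0 : 0 ≤ θ) (h8 : θ ≤ π/8) :
    H m θ ≤ Real.sqrt 2 - (Real.sqrt (1-m) + θ)⁻¹ := by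
  have hpi := Real.pi_pos
  have hm0 := hm.1
  have hm1 := hm.2
  have hδ : 0 < Real.sqrt (1-m) := Real.sqrt_pos.2 (by linarith)
  have hδ2 : Real.sqrt (1-m) ^ 2 = 1 - m := Real.sq_sqrt (by linarith)
  have hA : 0 < 1 - m * Real.sin θ ^ 2 :=
    aux_pos hm1 hm0.le (sq_nonneg _) (Real.sin_sq_le_one θ)
  have hB : 0 < 1 - m * Real.cos θ ^ 2 :=
    aux_pos hm1 hm0.le (sq_nonneg _) (Real.cos_sq_le_one θ)
  have hBA : 1 - m * Real.cos θ ^ 2 ≤ 1 - m * Real.sin θ ^ 2 := by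
    have hsc := sin_le_cos_of_le h0 (by linarith)
    have hs0 : 0 ≤ Real.sin θ := Real.sin_nonneg_of_nonneg_of_le_pi h0 (by linarith)
    nlinarith [mul_nonneg (mul_nonneg hm0.le (sub_nonneg.2 hsc))
      (by linarith : (0:ℝ) ≤ Real.cos θ + Real.sin θ)]
  -- cos θ ≥ √2/2 and cos 2θ ≥ √2/2
  have hcosθ : Real.sqrt 2 / 2 ≤ Real.cos θ := by
    have h := Real.strictAntiOn_cos.antitoneOn (show θ ∈ Icc 0 π from ⟨h0, by linarith⟩)
      (show π/4 ∈ Icc 0 π from ⟨by linarith, by linarith⟩) (by linarith : θ ≤ π/4)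
    rwa [Real.cos_pi_div_four] at h
  have hcos2θ : Real.sqrt 2 / 2 ≤ Real.cos (2*θ) := by
    have h := Real.strictAntiOn_cos.antitoneOn (show 2*θ ∈ Icc 0 π from ⟨by linarith, by linarith⟩)
      (show π/4 ∈ Icc 0 π from ⟨by linarith, by linarith⟩) (by linarith : 2*θ ≤ π/4)
    rwa [Real.cos_pi_div_four] at h
  have hr : Real.sqrt 2 * Real.sqrt 2 = 2 := Real.mul_self_sqrt (by norm_num)
  have ha7 : 1/2 ≤ Real.sqrt (1 - m * Real.sin θ ^ 2) ^ 2 := by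
    rw [Real.sq_sqrt hA.le]
    have hsin2 : Real.sin θ ^ 2 = 1 - Real.cos θ ^ 2 := by
      nlinarith [Real.sin_sq_add_cos_sq θ]
    nlinarith [mul_nonneg hm0.le (sq_nonneg (Real.sin θ)), sq_nonneg (Real.sin θ)]
  have hbu : Real.sqrt (1 - m * Real.cos θ ^ 2) ≤ Real.sqrt (1-m) + θ := by
    apply Real.sqrt_le_iff.2
    constructor
    · positivity
    · have hsinθ : Real.sin θ ≤ θ := Real.sin_le h0
      have hsin0 : 0 ≤ Real.sin θ := Real.sin_nonneg_of_nonneg_of_le_pi h0 (by linarith)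
      nlinarith [Real.sin_sq_add_cos_sq θ, mul_nonneg hδ.le h0,
        mul_nonneg hm0.le (sq_nonneg (Real.sin θ)), sq_nonneg (Real.sin θ)]
  exact alg_ub (Real.sqrt_pos.2 hA) (Real.sqrt_pos.2 hB) (by positivity)
    (Real.sqrt_le_sqrt hBA) hbu ha7 hcos2θ (Real.sqrt_le_sqrt (by linarith))

lemma f_ub {m : ℝ} (hm : m ∈ Ioo (0:ℝ) 1) :
    f m ≤ 3 + Real.log (Real.sqrt (1-m)) := by
  have hpi := Real.pi_pos
  have hm0 := hm.1
  have hm1 := hm.2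
  set δ := Real.sqrt (1-m) with hδ_def
  have hδ : 0 < δ := Real.sqrt_pos.2 (by linarith)
  have hi1 : IntervalIntegrable (H m) MeasureTheory.volume 0 (π/8) :=
    (cont_H hm0.le hm1).intervalIntegrable _ _
  have hi2 : IntervalIntegrable (H m) MeasureTheory.volume (π/8) (π/4) :=
    (cont_H hm0.le hm1).intervalIntegrable _ _
  have hsplit : f m = (∫ θ in (0:ℝ)..(π/8), H m θ) + ∫ θ in (π/8:ℝ)..(π/4), H m θ := by
    rw [fEq hm0 hm1, intervalIntegral.integral_add_adjacent_intervals hi1 hi2]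
  have hcontg : ContinuousOn (fun θ : ℝ => Real.sqrt 2 - (δ + θ)⁻¹) (uIcc 0 (π/8)) := by
    rw [uIcc_of_le (by linarith)]
    apply continuousOn_const.sub
    apply ContinuousOn.inv₀ (continuous_const.add continuous_id).continuousOn
    intro x hx
    have : 0 ≤ x := hx.1
    exact (show (0:ℝ) < δ + x by linarith).ne'
  have hig : IntervalIntegrable (fun θ : ℝ => Real.sqrt 2 - (δ + θ)⁻¹)
      MeasureTheory.volume 0 (π/8) := hcontg.intervalIntegrable
  have h1 : (∫ θ in (0:ℝ)..(π/8), H m θ)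
      ≤ ∫ θ in (0:ℝ)..(π/8), (Real.sqrt 2 - (δ + θ)⁻¹) :=
    intervalIntegral.integral_mono_on (by linarith) hi1 hig
      (fun θ hθ => H_ub hm hθ.1 hθ.2)
  have h2 : (∫ θ in (π/8:ℝ)..(π/4), H m θ) ≤ 0 := by
    have := intervalIntegral.integral_mono_on (by linarith : (π:ℝ)/8 ≤ π/4) hi2
      (_root_.intervalIntegrable_const (μ := MeasureTheory.volume) (c := (0:ℝ)))
      (fun θ hθ => H_nonpos hm (by linarith [hθ.1] : (0:ℝ) ≤ θ) hθ.2)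
    simpa using this
  have hiinv : IntervalIntegrable (fun θ : ℝ => (δ + θ)⁻¹) MeasureTheory.volume 0 (π/8) := by
    have : ContinuousOn (fun θ : ℝ => (δ + θ)⁻¹) (uIcc 0 (π/8)) := by
      rw [uIcc_of_le (by linarith)]
      apply ContinuousOn.inv₀ (continuous_const.add continuous_id).continuousOn
      intro x hx
      have : 0 ≤ x := hx.1
      exact (show (0:ℝ) < δ + x by linarith).ne'
    exact this.intervalIntegrable
  have hval : (∫ θ in (0:ℝ)..(π/8), (Real.sqrt 2 - (δ + θ)⁻¹))
      = Real.sqrt 2 * (π/8) - (Real.log (δ + π/8) - Real.log δ) := by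
    rw [intervalIntegral.integral_sub
      (_root_.intervalIntegrable_const (μ := MeasureTheory.volume) (c := Real.sqrt 2)) hiinv,
      intervalIntegral.integral_const]
    have hcomp : (∫ θ in (0:ℝ)..(π/8), (δ + θ)⁻¹) = Real.log (δ + π/8) - Real.log δ := by
      have h := intervalIntegral.integral_comp_add_left (a := (0:ℝ)) (b := π/8)
        (fun u : ℝ => u⁻¹) δ
      rw [add_zero] at h
      rw [h, integral_inv_of_pos hδ (by positivity),
        Real.log_div (by positivity) hδ.ne']
    rw [hcomp]
    simp
    ring
  have hs32 : Real.sqrt 2 ≤ 3/2 := by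
    nlinarith [Real.mul_self_sqrt (show (0:ℝ) ≤ 2 by norm_num), Real.sqrt_nonneg 2,
      sq_nonneg (Real.sqrt 2 - 3/2)]
  have hπ4 : π ≤ 4 := by linarith [Real.pi_le_four]
  have hb1 : Real.sqrt 2 * (π/8) ≤ 3/4 := by
    nlinarith [Real.sqrt_nonneg 2]
  have hlog1 : Real.log (π/8) ≤ Real.log (δ + π/8) :=
    Real.log_le_log (by positivity) (by linarith)
  have hlog2 : -Real.log (π/8) ≤ 5/3 := by
    have hπ3 : 3 ≤ π := by linarith [Real.pi_gt_three]
    have h8π : Real.log ((π/8)⁻¹) ≤ (π/8)⁻¹ - 1 :=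
      Real.log_le_sub_one_of_pos (by positivity)
    have hinv83 : (π/8 : ℝ)⁻¹ ≤ 8/3 := by
      rw [inv_le_iff_one_le_mul₀ (by positivity)]
      linarith
    rw [Real.log_inv] at h8π
    linarith
  linarith [hsplit, h1, h2, hval, hb1, hlog1, hlog2]

lemma exists_f_lt (y : ℝ) : ∃ m ∈ Ioo (0:ℝ) 1, f m < y := by
  set m := 1 - Real.exp (2*(min y 0 - 4)) with hm_def
  have hexp : 0 < Real.exp (2*(min y 0 - 4)) := Real.exp_pos _
  have hlt1 : Real.exp (2*(min y 0 - 4)) < 1 :=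
    Real.exp_lt_one_iff.2 (by nlinarith [min_le_right y 0])
  have hm : m ∈ Ioo (0:ℝ) 1 := ⟨by simp only [hm_def]; linarith, by simp only [hm_def]; linarith⟩
  refine ⟨m, hm, ?_⟩
  have hub := f_ub hm
  have h1m : 1 - m = Real.exp (2*(min y 0 - 4)) := by simp [hm_def]
  rw [h1m, Real.log_sqrt hexp.le, Real.log_exp] at hub
  have := min_le_left y 0
  linarith

lemma f_contOn {u v : ℝ} (hu : 0 < u) (huv : u ≤ v) (hv : v < 1) :
    ContinuousOn f (Icc u v) := by
  set c : ℝ → ℝ := fun x => max 0 (min x v) with hc_def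
  have hc_cont : Continuous c := continuous_const.max (continuous_id.min continuous_const)
  have hc0 : ∀ x, 0 ≤ c x := fun x => le_max_left _ _
  have hc1 : ∀ x, c x < 1 := fun x => by
    simp only [hc_def]
    exact lt_of_le_of_lt (max_le (by linarith) (le_trans (min_le_right _ _) le_rfl)) hv
  have hsin : Continuous fun p : ℝ × ℝ => Real.sqrt (1 - c p.1 * Real.sin p.2 ^ 2) :=
    (continuous_const.sub ((hc_cont.comp continuous_fst).mul
      ((Real.continuous_sin.comp continuous_snd).pow 2))).sqrt
  have hcos : Continuous fun p : ℝ × ℝ => Real.sqrt (1 - c p.1 * Real.cos p.2 ^ 2) :=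
    (continuous_const.sub ((hc_cont.comp continuous_fst).mul
      ((Real.continuous_cos.comp continuous_snd).pow 2))).sqrt
  have huncurry : Continuous (Function.uncurry fun x t => H (c x) t) := by
    unfold H Function.uncurry
    apply Continuous.mul
    · exact Real.continuous_cos.comp (continuous_const.mul continuous_snd)
    · apply Continuous.mul
      · exact (continuous_const.sub (continuous_const.mul (hc_cont.comp continuous_fst))).sqrt
      · apply Continuous.sub
        · apply hsin.inv₀
          intro p
          exact (Real.sqrt_pos.2 (aux_pos (hc1 p.1) (hc0 p.1) (sq_nonneg _)
            (Real.sin_sq_le_one p.2))).ne'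
        · apply hcos.inv₀
          intro p
          exact (Real.sqrt_pos.2 (aux_pos (hc1 p.1) (hc0 p.1) (sq_nonneg _)
            (Real.cos_sq_le_one p.2))).ne'
  have hG : Continuous fun x : ℝ => ∫ t in (0:ℝ)..(π/4), H (c x) t :=
    intervalIntegral.continuous_parametric_intervalIntegral_of_continuous' huncurry 0 (π/4)
  apply hG.continuousOn.congr
  intro x hx
  have hcx : c x = x := by
    simp only [hc_def]
    rw [min_eq_left hx.2, max_eq_right (by linarith [hx.1])]
  rw [fEq (lt_of_lt_of_le hu hx.1) (lt_of_le_of_lt hx.2 hv)]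
  simp only [hcx]

end OrbitAux
end OrbitAuxSection

theorem orbitlike_f_strictAnti_bij :
    StrictAntiOn
      (fun m => (2 * ellE m + (m - 2) * ellK m) * Real.sqrt (4 - 2 * m) / m)
      (Set.Ioo (0:ℝ) 1) ∧
    Set.BijOn
      (fun m => (2 * ellE m + (m - 2) * ellK m) * Real.sqrt (4 - 2 * m) / m)
      (Set.Ioo (0:ℝ) 1) (Set.Iio (0:ℝ)) := by
  have hSA : StrictAntiOn OrbitAux.f (Set.Ioo (0:ℝ) 1) := OrbitAux.f_strictAnti
  constructor
  · exact hSA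
  · refine ⟨fun m hm => OrbitAux.f_neg hm, hSA.injOn, ?_⟩
    intro y hy
    have hy0 : y < 0 := hy
    obtain ⟨v, hv, hfv⟩ := OrbitAux.exists_f_lt y
    set u := min (1/2 : ℝ) (-y/12) with hu_def
    have hu0 : 0 < u := lt_min (by norm_num) (by linarith)
    have hu2 : u ≤ 1/2 := min_le_left _ _
    have huIoo : u ∈ Set.Ioo (0:ℝ) 1 := ⟨hu0, by linarith⟩
    have hfu : y < OrbitAux.f u := by
      have h1 := OrbitAux.f_lb hu0 hu2
      have hu12 : u ≤ -y/12 := min_le_right _ _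
      linarith
    have huv : u < v := by
      by_contra hle
      push_neg at hle
      rcases eq_or_lt_of_le hle with he|hlt
      · rw [he] at hfv; linarith
      · have := hSA hv huIoo hlt
        linarith
    have hcont := OrbitAux.f_contOn hu0 huv.le hv.2
    obtain ⟨m, hm, hfm⟩ := intermediate_value_Icc' huv.le hcont ⟨hfv.le, hfu.le⟩
    exact ⟨m, ⟨lt_of_lt_of_le hu0 hm.1, lt_of_le_of_lt hm.2 hv.2⟩, hfm⟩
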